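/- If r ≡ 0 (mod 4) and n = 3r+1, or r ≡ 1 (mod 4) and n = 3r+2, or r ≡ 2 (mod 4) and n = 3r, then every r-edge-colouring of the complete graph K_n has a colour class with strictly more than ex(n, P_5) edges, and hence contains a monochromatic copy of P_5. -/

import Mathlib

/-- `G` contains the path on `t` vertices as a subgraph. -/
def ContainsPath (t : ℕ) {V : Type*} (G : SimpleGraph V) : Prop :=
  ∃ f : Fin t → V, Function.Injective f ∧
    ∀ i j : Fin t, (i : ℕ) + 1 = (j : ℕ) → G.Adj (f i) (f j)

/-- The graph on `Fin n` formed by the edges of colour `c`. -/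
def colorClass {n r : ℕ} (C : Sym2 (Fin n) → Fin r) (c : Fin r) : SimpleGraph (Fin n) :=
  SimpleGraph.fromEdgeSet {e | C e = c}

/-- The colouring `C` contains a monochromatic path on `t` vertices. -/
def HasMonoPath (t : ℕ) {n r : ℕ} (C : Sym2 (Fin n) → Fin r) : Prop :=
  ∃ c : Fin r, ContainsPath t (colorClass C c)

/-- The `r`-coloured Ramsey number of the path on `t` vertices. -/
noncomputable def pathRamsey (r t : ℕ) : ℕ :=
  sInf {n | ∀ C : Sym2 (Fin n) → Fin r, HasMonoPath t C}

/-- The Turán number of the path on `t` vertices. -/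
noncomputable def exPath (t n : ℕ) : ℕ :=
  sSup {m | ∃ G : SimpleGraph (Fin n), ¬ ContainsPath t G ∧ G.edgeSet.ncard = m}

namespace Turan5

/-- exact Turán function of P5 -/
def f (n : ℕ) : ℕ := 6 * (n / 4) + (if n % 4 = 2 then 1 else if n % 4 = 3 then 3 else 0)

lemma f_superadd (a b : ℕ) : f a + f b ≤ f (a + b) := by unfold f; split_ifs <;> omega

lemma f_mono {a b : ℕ} (h : a ≤ b) : f a ≤ f b := by unfold f; split_ifs <;> omega

lemma le_f {n : ℕ} (h : 5 ≤ n) : n + 1 ≤ f n := by unfold f; split_ifs <;> omega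

lemma small_f {n e : ℕ} (h : n ≤ 4) (he : 2 * e ≤ n * (n-1)) : e ≤ f n := by
  unfold f; interval_cases n <;> split_ifs <;> omega

variable {V : Type*} {G : SimpleGraph V}

lemma mkP5 {a b c d e : V}
    (h1 : G.Adj a b) (h2 : G.Adj b c) (h3 : G.Adj c d) (h4 : G.Adj d e)
    (hac : a ≠ c) (had : a ≠ d) (hae : a ≠ e) (hbd : b ≠ d) (hbe : b ≠ e) (hce : c ≠ e) :
    ContainsPath 5 G := by
  have hab := h1.ne; have hbc := h2.ne; have hcd := h3.ne; have hde := h4.ne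
  refine ⟨![a,b,c,d,e], ?_, ?_⟩
  · intro i j hij
    fin_cases i <;> fin_cases j <;> simp_all
  · intro i j hij
    fin_cases i <;> fin_cases j <;> simp_all
end Turan5


namespace Turan5

variable {V : Type*} {G : SimpleGraph V}

/-- restriction of a graph to a set of vertices, keeping ambient vertex type -/
def restrict (G : SimpleGraph V) (S : Set V) : SimpleGraph V where
  Adj a b := G.Adj a b ∧ a ∈ S ∧ b ∈ S
  symm := ⟨by intro a b ⟨h, ha, hb⟩; exact ⟨h.symm, hb, ha⟩⟩
  loopless := ⟨by intro a ⟨h, _⟩; exact G.loopless.irrefl a h⟩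

lemma restrict_adj {S : Set V} {a b : V} :
    (restrict G S).Adj a b ↔ G.Adj a b ∧ a ∈ S ∧ b ∈ S := Iff.rfl

lemma restrict_le {S : Set V} : restrict G S ≤ G := fun _ _ h => h.1

instance {S : Set V} [DecidableRel G.Adj] [DecidablePred (· ∈ S)] :
    DecidableRel (restrict G S).Adj := fun a b =>
  decidable_of_iff (G.Adj a b ∧ a ∈ S ∧ b ∈ S) restrict_adj.symm

lemma containsPath_mono {t : ℕ} {H : SimpleGraph V} (h : G ≤ H) :
    ContainsPath t G → ContainsPath t H := by
  rintro ⟨f, hinj, hadj⟩; exact ⟨f, hinj, fun i j hij => h (hadj i j hij)⟩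

section Fin
variable [Fintype V] [DecidableEq V] (G) [DecidableRel G.Adj]

/-- support as a Finset -/
def suppF : Finset V := Finset.univ.filter (fun v => 0 < G.degree v)

variable {G}

lemma mem_suppF {v : V} : v ∈ suppF G ↔ ∃ w, G.Adj v w := by
  simp [suppF, SimpleGraph.degree_pos_iff_exists_adj]

lemma adj_mem_suppF {v w : V} (h : G.Adj v w) : v ∈ suppF G := mem_suppF.mpr ⟨w, h⟩

lemma degree_le_suppF_card {v : V} (hv : v ∈ suppF G) :
    G.degree v ≤ (suppF G).card - 1 := by
  have hsub : G.neighborFinset v ⊆ (suppF G).erase v := by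
    intro w hw
    rw [SimpleGraph.mem_neighborFinset] at hw
    exact Finset.mem_erase.mpr ⟨fun he => G.loopless.irrefl v (he ▸ hw), adj_mem_suppF hw.symm⟩
  calc G.degree v ≤ ((suppF G).erase v).card := Finset.card_le_card hsub
    _ = (suppF G).card - 1 := Finset.card_erase_of_mem hv

lemma sum_suppF_degree : ∑ v ∈ suppF G, G.degree v = 2 * G.edgeFinset.card := by
  rw [← SimpleGraph.sum_degrees_eq_twice_card_edges]
  apply Finset.sum_subset (Finset.subset_univ _)
  intro v _ hv
  simp only [suppF, Finset.mem_filter, Finset.mem_univ, true_and, not_lt, Nat.le_zero] at hv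
  exact hv

/-- walk transfer into a closed set -/
lemma reachable_restrict {S : Set V} (hS : ∀ a b : V, G.Adj a b → a ∈ S → b ∈ S)
    {x y : V} (w : G.Walk x y) (hx : x ∈ S) : (restrict G S).Reachable x y := by
  induction w with
  | nil => exact SimpleGraph.Reachable.refl _
  | cons h p ih =>
    rename_i a b c
    have hb : b ∈ S := hS a b h hx
    have hadj : (restrict G S).Adj a b := restrict_adj.mpr ⟨h, hx, hb⟩
    exact hadj.reachable.trans (ih hb)

end Fin
end Turan5

namespace Turan5
variable {V : Type*} {G : SimpleGraph V}
section Fin2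
variable [Fintype V] [DecidableEq V] [DecidableRel G.Adj]

lemma edgeFinset_restrict {S : Set V} [DecidablePred (· ∈ S)]
    (hS : ∀ a b : V, G.Adj a b → (a ∈ S ↔ b ∈ S)) :
    (restrict G S).edgeFinset = G.edgeFinset.filter (fun e => ∀ v ∈ e, v ∈ S) := by
  ext e
  induction e with
  | _ a b =>
    simp only [SimpleGraph.mem_edgeFinset, Finset.mem_filter, SimpleGraph.mem_edgeSet,
      restrict_adj, Sym2.mem_iff]
    constructor
    · rintro ⟨h, ha, hb⟩
      exact ⟨h, fun v hv => by rcases hv with rfl | rfl <;> assumption⟩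
    · rintro ⟨h, hall⟩
      exact ⟨h, hall a (Or.inl rfl), hall b (Or.inr rfl)⟩

lemma edge_split {S : Set V} [DecidablePred (· ∈ S)]
    (hS : ∀ a b : V, G.Adj a b → (a ∈ S ↔ b ∈ S)) :
    G.edgeFinset.card
      = (restrict G S).edgeFinset.card + (restrict G Sᶜ).edgeFinset.card := by
  have h1 := edgeFinset_restrict (G := G) (S := S) hS
  have h2 := edgeFinset_restrict (G := G) (S := Sᶜ)
    (fun a b hab => by simp only [Set.mem_compl_iff]; exact not_congr (hS a b hab))
  have hfc : Finset.filter (fun e => ∀ v ∈ e, v ∈ Sᶜ) G.edgeFinset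
      = Finset.filter (fun e => ¬ ∀ v ∈ e, v ∈ S) G.edgeFinset := by
    apply Finset.filter_congr
    intro e he
    induction e with
    | _ a b =>
      simp only [SimpleGraph.mem_edgeFinset, SimpleGraph.mem_edgeSet] at he
      have hiff := hS a b he
      simp only [Sym2.mem_iff, Set.mem_compl_iff]
      constructor
      · intro hall hcon
        exact hall a (Or.inl rfl) (hcon a (Or.inl rfl))
      · intro hnot v hv
        rcases hv with rfl | rfl
        · intro hv'; exact hnot (fun w hw => by rcases hw with rfl | rfl; exacts [hv', hiff.mp hv'])
        · intro hv'; exact hnot (fun w hw => by rcases hw with rfl | rfl; exacts [hiff.mpr hv', hv'])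
  rw [h1, h2, hfc]
  exact (Finset.card_filter_add_card_filter_not (s := G.edgeFinset)
    (p := fun e => ∀ v ∈ e, v ∈ S)).symm

lemma suppF_restrict {S : Set V} [DecidablePred (· ∈ S)]
    (hS : ∀ a b : V, G.Adj a b → (a ∈ S ↔ b ∈ S)) :
    suppF (restrict G S) = (suppF G).filter (· ∈ S) := by
  ext v
  simp only [mem_suppF, Finset.mem_filter, restrict_adj]
  constructor
  · rintro ⟨w, h, hv, hw⟩; exact ⟨⟨w, h⟩, hv⟩
  · rintro ⟨⟨w, hw⟩, hvS⟩
    exact ⟨w, hw, hvS, (hS v w hw).mp hvS⟩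

lemma supp_split {S : Set V} [DecidablePred (· ∈ S)]
    (hS : ∀ a b : V, G.Adj a b → (a ∈ S ↔ b ∈ S)) :
    (suppF G).card = (suppF (restrict G S)).card + (suppF (restrict G Sᶜ)).card := by
  rw [suppF_restrict hS,
    suppF_restrict (G := G) (S := Sᶜ)
      (fun a b hab => by simp only [Set.mem_compl_iff]; exact not_congr (hS a b hab))]
  rw [← Finset.card_filter_add_card_filter_not (s := suppF G) (p := (· ∈ S))]
  rfl

/-- deleting one vertex: edge count -/
lemma edge_del {v : V} :
    G.edgeFinset.card = (restrict G {v}ᶜ).edgeFinset.card + G.degree v := by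
  classical
  have h1 : (restrict G {v}ᶜ).edgeFinset = G.edgeFinset.filter (fun e => ¬ v ∈ e) := by
    ext e
    induction e with
    | _ a b =>
      simp only [SimpleGraph.mem_edgeFinset, Finset.mem_filter, SimpleGraph.mem_edgeSet,
        restrict_adj, Sym2.mem_iff, Set.mem_compl_iff, Set.mem_singleton_iff]
      constructor
      · rintro ⟨h, ha, hb⟩ 
        exact ⟨h, by push_neg; exact ⟨fun he => ha he.symm, fun he => hb he.symm⟩⟩
      · rintro ⟨h, hne⟩
        push_neg at hne
        exact ⟨h, fun he => hne.1 he.symm, fun he => hne.2 he.symm⟩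
  have h2 : G.edgeFinset.filter (fun e => v ∈ e) = G.incidenceFinset v := by
    ext e
    simp [SimpleGraph.mem_incidenceFinset, SimpleGraph.incidenceSet,
      SimpleGraph.mem_edgeFinset, and_comm]
  rw [h1, ← SimpleGraph.card_incidenceFinset_eq_degree, ← h2]
  rw [← Finset.card_filter_add_card_filter_not
      (s := G.edgeFinset) (p := fun e => v ∈ e)]
  omega

end Fin2
end Turan5

namespace Turan5
variable {V : Type*} {G : SimpleGraph V}
section Fin3
variable [Fintype V] [DecidableEq V] [DecidableRel G.Adj]

lemma leaf_not_mem_path {a b v : V} (p : G.Walk a b) (hp : p.IsPath)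
    (ha : a ≠ v) (hb : b ≠ v) (hdeg : G.degree v ≤ 1) : v ∉ p.support := by
  intro hv
  set q := p.takeUntil v hv with hq
  set r := p.dropUntil v hv with hr
  have hnq : ¬ q.Nil := SimpleGraph.Walk.not_nil_of_ne ha
  have hnr : ¬ r.Nil := SimpleGraph.Walk.not_nil_of_ne (fun h => hb h.symm)
  have hnqr : ¬ q.reverse.Nil := SimpleGraph.Walk.not_nil_of_ne (fun h => ha h.symm)
  obtain ⟨y, hvy, r', hr'⟩ := SimpleGraph.Walk.not_nil_iff.mp hnr
  obtain ⟨x, hvx, q'', hq''⟩ := SimpleGraph.Walk.not_nil_iff.mp hnqr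
  have hxq : x ∈ q.support := by
    have : x ∈ q.reverse.support := by rw [hq'']; simp
    rwa [SimpleGraph.Walk.support_reverse, List.mem_reverse] at this
  have hyr : y ∈ r.support.tail := by rw [hr']; simp
  have hnodup := (SimpleGraph.Walk.isPath_def p).mp hp
  have hspec : p = q.append r := (p.take_spec hv).symm
  rw [hspec, SimpleGraph.Walk.support_append, List.nodup_append] at hnodup
  have hxy : x ≠ y := fun h => hnodup.2.2 x hxq y hyr h
  have hsub : ({x, y} : Finset V) ⊆ G.neighborFinset v := by
    intro z hz
    rw [SimpleGraph.mem_neighborFinset]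
    rcases Finset.mem_insert.mp hz with rfl | hz
    · exact hvx
    · rw [Finset.mem_singleton.mp hz]; exact hvy
  have h2 : 2 ≤ G.degree v := by
    have := Finset.card_le_card hsub
    rwa [Finset.card_pair hxy] at this
  omega

/-- every walk from `u` stays in `{u,v}` when `u`'s and `v`'s neighborhoods are trivial -/
lemma walk_stuck {u v : V} (hu : ∀ z, G.Adj u z → z = v) (hv : ∀ z, G.Adj v z → z = u)
    {x y : V} (w : G.Walk x y) (hx : x = u ∨ x = v) : y = u ∨ y = v := by
  induction w with
  | nil => exact hx
  | cons h p ih =>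
    rename_i a b c
    rcases hx with rfl | rfl
    · exact ih (Or.inr (hu b h))
    · exact ih (Or.inl (hv b h))

end Fin3
end Turan5

namespace Turan5
variable {V : Type*} {G : SimpleGraph V}
section Fin4
variable [Fintype V] [DecidableEq V] [DecidableRel G.Adj]

lemma exists_outside {s : Finset V} (h : s.card < (suppF G).card) :
    ∃ y ∈ suppF G, y ∉ s := by
  by_contra h'
  push_neg at h'
  exact absurd (Finset.card_le_card h') (by omega)

lemma boundary
    (hconn : ∀ a ∈ suppF G, ∀ b ∈ suppF G, G.Reachable a b)
    {s : Finset V} (hcard : s.card < (suppF G).card)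
    {x : V} (hx : x ∈ suppF G) (hxs : x ∈ s) :
    ∃ a b : V, a ∈ s ∧ b ∉ s ∧ G.Adj a b := by
  obtain ⟨y, hy, hys⟩ := exists_outside hcard
  obtain ⟨w⟩ := hconn x hx y hy
  obtain ⟨d, _, hfst, hsnd⟩ := w.exists_boundary_dart (↑s : Set V)
    (by simpa using hxs) (by simpa using hys)
  exact ⟨d.fst, d.snd, by simpa using hfst, by simpa using hsnd, d.adj⟩

lemma card4 (p1 p2 p3 p4 : V) : ({p1, p2, p3, p4} : Finset V).card ≤ 4 := by
  apply le_trans (Finset.card_insert_le _ _)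
  apply Nat.succ_le_succ
  apply le_trans (Finset.card_insert_le _ _)
  apply Nat.succ_le_succ
  apply le_trans (Finset.card_insert_le _ _)
  simp

lemma exists_small_degree
    (hconn : ∀ a ∈ suppF G, ∀ b ∈ suppF G, G.Reachable a b)
    (h5 : 5 ≤ (suppF G).card) (hP5 : ¬ ContainsPath 5 G) :
    ∃ v ∈ suppF G, G.degree v ≤ 1 := by
  by_contra hcon
  push_neg at hcon
  have hd : ∀ v ∈ suppF G, 2 ≤ G.degree v := fun v hv => hcon v hv
  have hnb : ∀ v ∈ suppF G, ∀ t : V, ∃ z, G.Adj v z ∧ z ≠ t := by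
    intro v hv t
    have h1 : 1 < (G.neighborFinset v).card := hd v hv
    obtain ⟨z, hz, hne⟩ := Finset.exists_mem_ne h1 t
    exact ⟨z, (SimpleGraph.mem_neighborFinset _ _ _).mp hz, hne⟩
  -- C4 case leads to contradiction
  have hC4 : ∀ q1 q2 q3 q4 : V, G.Adj q1 q2 → G.Adj q2 q3 → G.Adj q3 q4 → G.Adj q1 q4 →
      q1 ≠ q3 → q2 ≠ q4 → False := by
    intro q1 q2 q3 q4 h12 h23 h34 h14 h13 h24
    obtain ⟨a, z, has, hzs, hadj⟩ := boundary (s := {q1, q2, q3, q4}) hconn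
      (lt_of_le_of_lt (card4 q1 q2 q3 q4) h5) (adj_mem_suppF h12) (by simp)
    simp only [Finset.mem_insert, Finset.mem_singleton] at has hzs
    push_neg at hzs
    obtain ⟨hz1, hz2, hz3, hz4⟩ := hzs
    rcases has with rfl | rfl | rfl | rfl
    · exact hP5 (mkP5 hadj.symm h14 h34.symm h23.symm hz4 hz3 hz2 h13 h12.ne h24.symm)
    · exact hP5 (mkP5 hadj.symm h12.symm h14 h34.symm hz1 hz4 hz3 h24 h23.ne h13)
    · exact hP5 (mkP5 hadj.symm h34 h14.symm h12 hz4 hz1 hz2 h13.symm h23.ne' h24.symm)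
    · exact hP5 (mkP5 hadj.symm h14.symm h12 h23 hz1 hz2 hz3 h24.symm h34.ne' h13)
  -- find a P4
  obtain ⟨p1, p2, p3, p4, h12, h23, h34, h13, h14, h24⟩ :
      ∃ p1 p2 p3 p4 : V, G.Adj p1 p2 ∧ G.Adj p2 p3 ∧ G.Adj p3 p4 ∧
        p1 ≠ p3 ∧ p1 ≠ p4 ∧ p2 ≠ p4 := by
    obtain ⟨v, hv⟩ := Finset.card_pos.mp (by omega : 0 < (suppF G).card)
    obtain ⟨a, ha, b, hb, hab⟩ := Finset.one_lt_card.mp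
      (lt_of_lt_of_le Nat.one_lt_two (hd v hv) : 1 < (G.neighborFinset v).card)
    rw [SimpleGraph.mem_neighborFinset] at ha hb
    have hva : a ∈ suppF G := adj_mem_suppF ha.symm
    obtain ⟨x, hax, hxv⟩ := hnb a hva v
    by_cases hxb : x = b
    · subst hxb
      -- triangle v a x
      obtain ⟨c, z, hcs, hzs, hadj⟩ := boundary (s := {v, a, x}) hconn
        (by
          have h3 : ({v, a, x} : Finset V).card ≤ 3 := by
            apply le_trans (Finset.card_insert_le _ _)
            apply Nat.succ_le_succ
            apply le_trans (Finset.card_insert_le _ _)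
            simp
          omega) hv (by simp)
      simp only [Finset.mem_insert, Finset.mem_singleton] at hcs hzs
      push_neg at hzs
      obtain ⟨hz1, hz2, hz3⟩ := hzs
      rcases hcs with rfl | rfl | rfl
      · exact ⟨z, c, a, x, hadj.symm, ha, hax, hz2, hz3, hb.ne⟩
      · exact ⟨z, c, v, x, hadj.symm, ha.symm, hb, hz1, hz3, hax.ne⟩
      · exact ⟨z, c, v, a, hadj.symm, hb.symm, ha, hz1, hz2, hax.ne'⟩
    · exact ⟨x, a, v, b, hax.symm, ha.symm, hb, hxv, hxb, hab⟩
  have hp1 : p1 ∈ suppF G := adj_mem_suppF h12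
  have hp4 : p4 ∈ suppF G := adj_mem_suppF h34.symm
  obtain ⟨x, h1x, hx2⟩ := hnb p1 hp1 p2
  by_cases hx3 : x = p3
  · have h1p3 : G.Adj p1 p3 := by rwa [hx3] at h1x
    obtain ⟨x', h4x, hx3'⟩ := hnb p4 hp4 p3
    by_cases hx1 : x' = p1
    · have h41 : G.Adj p4 p1 := by rwa [hx1] at h4x
      exact hC4 p1 p2 p3 p4 h12 h23 h34 h41.symm h13 h24
    · by_cases hx2' : x' = p2
      · have h42 : G.Adj p4 p2 := by rwa [hx2'] at h4x
        -- edges 12,23,34,13,24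
        obtain ⟨c, z, hcs, hzs, hadj⟩ := boundary (s := {p1, p2, p3, p4}) hconn
          (lt_of_le_of_lt (card4 p1 p2 p3 p4) h5) hp1 (by simp)
        simp only [Finset.mem_insert, Finset.mem_singleton] at hcs hzs
        push_neg at hzs
        obtain ⟨hz1, hz2, hz3, hz4⟩ := hzs
        rcases hcs with rfl | rfl | rfl | rfl
        · exact hP5 (mkP5 hadj.symm h1p3 h34 h42 hz3 hz4 hz2 h14 h12.ne h23.ne')
        · exact hP5 (mkP5 hadj.symm h12.symm h1p3 h34 hz1 hz3 hz4 h23.ne h24 h14)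
        · exact hP5 (mkP5 hadj.symm h1p3.symm h12 h42.symm hz1 hz2 hz4 h23.ne' h34.ne h14)
        · exact hP5 (mkP5 hadj.symm h42 h12.symm h1p3 hz2 hz1 hz3 h14.symm h34.ne' h23.ne)
      · exact hP5 (mkP5 h4x.symm h34.symm h23.symm h12.symm hx3' hx2' hx1 h24.symm h14.symm h13.symm)
  · by_cases hx4 : x = p4
    · have h14' : G.Adj p1 p4 := by rwa [hx4] at h1x
      exact hC4 p1 p2 p3 p4 h12 h23 h34 h14' h13 h24
    · exact hP5 (mkP5 h1x.symm h12 h23 h34 hx2 hx3 hx4 h13 h14 h24)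

end Fin4
end Turan5

namespace Turan5
variable {V : Type*} {G : SimpleGraph V}

/-- bound for graphs connected on their support -/
def g (n : ℕ) : ℕ := if n ≤ 4 then f n else n + 1

lemma g_le_f (n : ℕ) : g n ≤ f n := by
  unfold g f; split_ifs <;> omega

lemma reachable_restrict' {S : Set V} {x y : V} (w : G.Walk x y)
    (hsupp : ∀ z ∈ w.support, z ∈ S) : (restrict G S).Reachable x y := by
  induction w with
  | nil => exact SimpleGraph.Reachable.refl _
  | cons h p ih =>
    rename_i a b c
    have hadj : (restrict G S).Adj a b := ⟨h, hsupp a (by simp), hsupp b (by simp)⟩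
    exact hadj.reachable.trans (ih (fun z hz => hsupp z (by simp [hz])))

section CS
variable [Fintype V] [DecidableEq V]

lemma CS : ∀ (N : ℕ) (G : SimpleGraph V) [DecidableRel G.Adj],
    (suppF G).card = N →
    (∀ a ∈ suppF G, ∀ b ∈ suppF G, G.Reachable a b) → ¬ ContainsPath 5 G →
    G.edgeFinset.card ≤ g N := by
  intro N
  induction N using Nat.strong_induction_on with
  | _ N ih =>
  intro G _ hcard hconn hP5
  by_cases hN : N ≤ 4
  · have hdeg : ∀ v ∈ suppF G, G.degree v ≤ N - 1 := fun v hv =>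
      hcard ▸ degree_le_suppF_card hv
    have hsum : ∑ v ∈ suppF G, G.degree v = 2 * G.edgeFinset.card := sum_suppF_degree
    have hb : ∑ v ∈ suppF G, G.degree v ≤ N * (N - 1) := by
      calc ∑ v ∈ suppF G, G.degree v ≤ ∑ _v ∈ suppF G, (N - 1) :=
            Finset.sum_le_sum hdeg
        _ = N * (N - 1) := by rw [Finset.sum_const, hcard, smul_eq_mul]
    have hef : G.edgeFinset.card ≤ f N := small_f hN (by omega)
    unfold g; split_ifs; exact hef
  · push_neg at hN
    obtain ⟨v, hv, hdv⟩ := exists_small_degree hconn (by omega) hP5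
    have hdv1 : G.degree v = 1 := by
      have h0 : 0 < G.degree v := (Finset.mem_filter.mp hv).2
      omega
    obtain ⟨u, hu⟩ := Finset.card_eq_one.mp
      (show (G.neighborFinset v).card = 1 by
        rw [SimpleGraph.card_neighborFinset_eq_degree]; exact hdv1)
    have hadj_vu : G.Adj v u :=
      (SimpleGraph.mem_neighborFinset _ _ _).mp (hu ▸ Finset.mem_singleton_self u)
    have hu_supp : u ∈ suppF G := adj_mem_suppF hadj_vu.symm
    have hnv : ∀ z, G.Adj v z → z = u := by
      intro z hz
      have : z ∈ G.neighborFinset v := (SimpleGraph.mem_neighborFinset _ _ _).mpr hz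
      rw [hu] at this; exact Finset.mem_singleton.mp this
    have hdu : 2 ≤ G.degree u := by
      by_contra hcon
      push_neg at hcon
      have hdu1 : G.degree u = 1 := by
        have h0 : 0 < G.degree u := (Finset.mem_filter.mp hu_supp).2
        omega
      obtain ⟨w, hw⟩ := Finset.card_eq_one.mp
        (show (G.neighborFinset u).card = 1 by
          rw [SimpleGraph.card_neighborFinset_eq_degree]; exact hdu1)
      have hwv : w = v := by
        have : v ∈ G.neighborFinset u := (SimpleGraph.mem_neighborFinset _ _ _).mpr hadj_vu.symm
        rw [hw] at this
        exact (Finset.mem_singleton.mp this).symm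
      rw [hwv] at hw
      have hnu : ∀ z, G.Adj u z → z = v := by
        intro z hz
        have : z ∈ G.neighborFinset u := (SimpleGraph.mem_neighborFinset _ _ _).mpr hz
        rw [hw] at this; exact Finset.mem_singleton.mp this
      obtain ⟨y, hy, hyn⟩ := exists_outside (G := G) (s := {u, v})
        (by
          have : ({u, v} : Finset V).card ≤ 2 := by
            apply le_trans (Finset.card_insert_le _ _)
            apply Nat.succ_le_succ
            simp
          omega)
      obtain ⟨wk⟩ := hconn u hu_supp y hy
      have := walk_stuck hnu hnv wk (Or.inl rfl)
      simp only [Finset.mem_insert, Finset.mem_singleton] at hyn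
      push_neg at hyn
      rcases this with rfl | rfl
      · exact hyn.1 rfl
      · exact hyn.2 rfl
    set G' := restrict G ({v}ᶜ : Set V) with hG'def
    have hedel : G.edgeFinset.card = G'.edgeFinset.card + 1 := by
      have h := edge_del (G := G) (v := v)
      rw [hdv1] at h
      exact h
    have hsupp' : suppF G' = (suppF G).erase v := by
      ext w
      rw [mem_suppF, Finset.mem_erase, mem_suppF]
      constructor
      · rintro ⟨z, hz, hwv, hzv⟩
        exact ⟨by simpa using hwv, ⟨z, hz⟩⟩
      · rintro ⟨hwv, z, hz⟩
        by_cases hzv : z = v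
        · subst hzv
          have hwu : w = u := by
            have : w ∈ G.neighborFinset z := (SimpleGraph.mem_neighborFinset _ _ _).mpr hz.symm
            rw [hu] at this; exact Finset.mem_singleton.mp this
          subst hwu
          obtain ⟨z', hz', hz'v⟩ := Finset.exists_mem_ne
            (show 1 < (G.neighborFinset w).card by
              rw [SimpleGraph.card_neighborFinset_eq_degree]; omega) z
          exact ⟨z', (SimpleGraph.mem_neighborFinset _ _ _).mp hz', by simpa using hwv,
            by simpa using hz'v⟩
        · exact ⟨z, hz, by simpa using hwv, by simpa using hzv⟩
    have hcard' : (suppF G').card = N - 1 := by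
      rw [hsupp', Finset.card_erase_of_mem hv, hcard]
    have hconn' : ∀ a ∈ suppF G', ∀ b ∈ suppF G', G'.Reachable a b := by
      intro a ha b hb
      rw [hsupp', Finset.mem_erase] at ha hb
      obtain ⟨w⟩ := hconn a ha.2 b hb.2
      have hvp : v ∉ (w.toPath : G.Walk a b).support :=
        leaf_not_mem_path _ w.toPath.2 ha.1 hb.1 (le_of_eq hdv1)
      exact reachable_restrict' _ (fun z hz => by
        simp only [Set.mem_compl_iff, Set.mem_singleton_iff]
        exact fun he => hvp (he ▸ hz))
    have hP5' : ¬ ContainsPath 5 G' := fun h => hP5 (containsPath_mono restrict_le h)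
    have hIH := ih (N - 1) (by omega) G' hcard' hconn' hP5'
    by_cases hN6 : 6 ≤ N
    · unfold g at hIH ⊢; split_ifs at hIH ⊢ <;> omega
    · have hN5 : N = 5 := by omega
      subst hN5
      have hIH6 : G'.edgeFinset.card ≤ 6 := by
        have hg4 : g (5 - 1) = 6 := by norm_num [g, f]
        omega
      by_cases he' : G'.edgeFinset.card ≤ 5
      · unfold g; split_ifs <;> omega
      · exfalso
        have he6 : G'.edgeFinset.card = 6 := by omega
        have hs4 : (suppF G').card = 4 := by omega
        have hsum12 : ∑ w ∈ suppF G', G'.degree w = 12 := by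
          rw [sum_suppF_degree, he6]
        have hle3 : ∀ z ∈ suppF G', G'.degree z ≤ 3 := fun z hz => by
          have := degree_le_suppF_card (G := G') hz; omega
        have hdeg3 : ∀ w ∈ suppF G', G'.degree w = 3 := by
          intro w hw
          by_contra hne
          have hlt : ∑ z ∈ suppF G', G'.degree z < ∑ _z ∈ suppF G', 3 :=
            Finset.sum_lt_sum hle3 ⟨w, hw, lt_of_le_of_ne (hle3 w hw) hne⟩
          rw [Finset.sum_const, hs4, smul_eq_mul] at hlt
          omega
        have hnbr : ∀ w ∈ suppF G', ∀ z ∈ suppF G', w ≠ z → G'.Adj w z := by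
          intro w hw z hz hwz
          have hsub : G'.neighborFinset w ⊆ (suppF G').erase w := by
            intro t ht
            rw [SimpleGraph.mem_neighborFinset] at ht
            exact Finset.mem_erase.mpr ⟨fun he => G'.loopless.irrefl w (he ▸ ht),
              adj_mem_suppF ht.symm⟩
          have heq : G'.neighborFinset w = (suppF G').erase w :=
            Finset.eq_of_subset_of_card_le hsub
              (by rw [Finset.card_erase_of_mem hw, hs4]
                  have h3 : (G'.neighborFinset w).card = 3 := by
                    rw [SimpleGraph.card_neighborFinset_eq_degree]; exact hdeg3 w hw
                  omega)
          have : z ∈ G'.neighborFinset w := by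
            rw [heq]; exact Finset.mem_erase.mpr ⟨hwz.symm, hz⟩
          exact (SimpleGraph.mem_neighborFinset _ _ _).mp this
        have hu' : u ∈ suppF G' := by
          rw [hsupp']; exact Finset.mem_erase.mpr ⟨hadj_vu.ne', hu_supp⟩
        have hc3 : ((suppF G').erase u).card = 3 := by
          rw [Finset.card_erase_of_mem hu', hs4]
        obtain ⟨x, hx⟩ := Finset.card_pos.mp (by omega : 0 < ((suppF G').erase u).card)
        have hc2 : (((suppF G').erase u).erase x).card = 2 := by
          rw [Finset.card_erase_of_mem hx, hc3]
        obtain ⟨y, hy⟩ := Finset.card_pos.mp (by omega : 0 < (((suppF G').erase u).erase x).card)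
        have hc1 : ((((suppF G').erase u).erase x).erase y).card = 1 := by
          rw [Finset.card_erase_of_mem hy, hc2]
        obtain ⟨z, hz⟩ := Finset.card_pos.mp
          (by omega : 0 < ((((suppF G').erase u).erase x).erase y).card)
        obtain ⟨hzy, hzx, hzu, hzs⟩ :
            z ≠ y ∧ z ≠ x ∧ z ≠ u ∧ z ∈ suppF G' := by
          have h1 := Finset.mem_erase.mp hz
          have h2 := Finset.mem_erase.mp h1.2
          have h3 := Finset.mem_erase.mp h2.2
          exact ⟨h1.1, h2.1, h3.1, h3.2⟩
        obtain ⟨hyx, hyu, hys⟩ : y ≠ x ∧ y ≠ u ∧ y ∈ suppF G' := by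
          have h1 := Finset.mem_erase.mp hy
          have h2 := Finset.mem_erase.mp h1.2
          exact ⟨h1.1, h2.1, h2.2⟩
        obtain ⟨hxu, hxs⟩ : x ≠ u ∧ x ∈ suppF G' := Finset.mem_erase.mp hx
        have hne_v : ∀ t, t ∈ suppF G' → t ≠ v := by
          intro t ht
          rw [hsupp'] at ht
          exact (Finset.mem_erase.mp ht).1
        have hux : G.Adj u x := (hnbr u hu' x hxs (Ne.symm hxu)).1
        have hxy : G.Adj x y := (hnbr x hxs y hys (Ne.symm hyx)).1
        have hyz : G.Adj y z := (hnbr y hys z hzs (Ne.symm hzy)).1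
        exact hP5 (mkP5 hadj_vu hux hxy hyz
          (Ne.symm (hne_v x hxs)) (Ne.symm (hne_v y hys)) (Ne.symm (hne_v z hzs))
          (Ne.symm hyu) (Ne.symm hzu) (Ne.symm hzx))

end CS
end Turan5

namespace Turan5
variable {V : Type*}

section globalBound
variable [Fintype V] [DecidableEq V]

lemma globalBound : ∀ (N : ℕ) (G : SimpleGraph V) [DecidableRel G.Adj],
    (suppF G).card = N → ¬ ContainsPath 5 G → G.edgeFinset.card ≤ f N := by
  intro N
  induction N using Nat.strong_induction_on with
  | _ N ih =>
  intro G _ hcard hP5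
  rcases Nat.eq_zero_or_pos G.edgeFinset.card with he | he
  · omega
  · obtain ⟨x, y, hadj⟩ : ∃ x y, G.Adj x y := by
      obtain ⟨e, hem⟩ := Finset.card_pos.mp he
      induction e with
      | _ x y =>
        exact ⟨x, y, (SimpleGraph.mem_edgeSet G).mp (SimpleGraph.mem_edgeFinset.mp hem)⟩
    haveI : DecidablePred (· ∈ ({w | G.Reachable x w} : Set V)) :=
      fun a => Classical.dec _
    set S : Set V := {w | G.Reachable x w} with hSdef
    have hclosed : ∀ a b, G.Adj a b → (a ∈ S ↔ b ∈ S) := fun a b hab =>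
      ⟨fun ha => ha.trans hab.reachable, fun hb => hb.trans hab.symm.reachable⟩
    have hx_S : x ∈ S := SimpleGraph.Reachable.refl x
    set G1 := restrict G S with hG1def
    set G2 := restrict G Sᶜ with hG2def
    have hsplit : G.edgeFinset.card = G1.edgeFinset.card + G2.edgeFinset.card :=
      edge_split hclosed
    have hsupp : (suppF G).card = (suppF G1).card + (suppF G2).card :=
      supp_split hclosed
    have hG1P5 : ¬ ContainsPath 5 G1 := fun h => hP5 (containsPath_mono restrict_le h)
    have hG2P5 : ¬ ContainsPath 5 G2 := fun h => hP5 (containsPath_mono restrict_le h)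
    have hG1conn : ∀ a ∈ suppF G1, ∀ b ∈ suppF G1, G1.Reachable a b := by
      intro a ha b hb
      obtain ⟨za, hza⟩ := mem_suppF.mp ha
      obtain ⟨zb, hzb⟩ := mem_suppF.mp hb
      have haS : a ∈ S := hza.2.1
      have hbS : b ∈ S := hzb.2.1
      obtain ⟨w⟩ := (haS : G.Reachable x a).symm.trans (hbS : G.Reachable x b)
      exact reachable_restrict' w (fun z hz => haS.trans ⟨w.takeUntil z hz⟩)
    have hx1 : x ∈ suppF G1 :=
      adj_mem_suppF (restrict_adj.mpr ⟨hadj, hx_S, hx_S.trans hadj.reachable⟩)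
    have h1pos : 0 < (suppF G1).card := Finset.card_pos.mpr ⟨x, hx1⟩
    have he1 : G1.edgeFinset.card ≤ f (suppF G1).card :=
      le_trans (CS _ G1 rfl hG1conn hG1P5) (g_le_f _)
    have he2 : G2.edgeFinset.card ≤ f (suppF G2).card :=
      ih (suppF G2).card (by omega) G2 rfl hG2P5
    calc G.edgeFinset.card = G1.edgeFinset.card + G2.edgeFinset.card := hsplit
      _ ≤ f (suppF G1).card + f (suppF G2).card := Nat.add_le_add he1 he2
      _ ≤ f ((suppF G1).card + (suppF G2).card) := f_superadd _ _
      _ = f N := by rw [← hsupp, hcard]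

/-- final bound: any P5-free graph on a finite vertex type -/
lemma bound_card (G : SimpleGraph V) [DecidableRel G.Adj] (hP5 : ¬ ContainsPath 5 G) :
    G.edgeFinset.card ≤ f (Fintype.card V) := by
  refine le_trans (globalBound (suppF G).card G rfl hP5) (f_mono ?_)
  exact le_trans (Finset.card_le_card (Finset.subset_univ _)) (le_of_eq (Finset.card_univ))

end globalBound
end Turan5

namespace Turan5

lemma main_arith {r n : ℕ} (hr : 1 ≤ r)
    (h : (r % 4 = 0 ∧ n = 3 * r + 1) ∨ (r % 4 = 1 ∧ n = 3 * r + 2) ∨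
      (r % 4 = 2 ∧ n = 3 * r)) :
    r * f n < n * (n - 1) / 2 := by
  rcases h with ⟨h1, rfl⟩ | ⟨h1, rfl⟩ | ⟨h1, rfl⟩
  · obtain ⟨m, rfl⟩ : ∃ m, r = 4 * m := ⟨r / 4, by omega⟩
    have hm : 1 ≤ m := by omega
    have hf : f (3 * (4 * m) + 1) = 18 * m := by unfold f; split_ifs <;> omega
    rw [hf]
    have hsub : (3 * (4 * m) + 1) - 1 = 12 * m := by omega
    have h2 : (3 * (4 * m) + 1) * ((3 * (4 * m) + 1) - 1) = 2 * (72 * (m * m) + 6 * m) := by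
      rw [hsub]; ring
    rw [h2, Nat.mul_div_cancel_left _ (by norm_num : 0 < 2)]
    have h3 : (4 * m) * (18 * m) = 72 * (m * m) := by ring
    rw [h3]
    exact Nat.lt_add_of_pos_right (by omega)
  · obtain ⟨m, rfl⟩ : ∃ m, r = 4 * m + 1 := ⟨r / 4, by omega⟩
    have hf : f (3 * (4 * m + 1) + 2) = 18 * m + 6 := by unfold f; split_ifs <;> omega
    rw [hf]
    have hsub : (3 * (4 * m + 1) + 2) - 1 = 12 * m + 4 := by omega
    have h2 : (3 * (4 * m + 1) + 2) * ((3 * (4 * m + 1) + 2) - 1)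
        = 2 * (72 * (m * m) + (54 * m + 10)) := by rw [hsub]; ring
    rw [h2, Nat.mul_div_cancel_left _ (by norm_num : 0 < 2)]
    have h3 : (4 * m + 1) * (18 * m + 6) = 72 * (m * m) + (42 * m + 6) := by ring
    rw [h3]
    exact Nat.add_lt_add_left (by omega) _
  · obtain ⟨m, rfl⟩ : ∃ m, r = 4 * m + 2 := ⟨r / 4, by omega⟩
    have hf : f (3 * (4 * m + 2)) = 18 * m + 7 := by unfold f; split_ifs <;> omega
    rw [hf]
    have hsub : (3 * (4 * m + 2)) - 1 = 12 * m + 5 := by omega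
    have h2 : (3 * (4 * m + 2)) * ((3 * (4 * m + 2)) - 1)
        = 2 * (72 * (m * m) + (66 * m + 15)) := by rw [hsub]; ring
    rw [h2, Nat.mul_div_cancel_left _ (by norm_num : 0 < 2)]
    have h3 : (4 * m + 2) * (18 * m + 7) = 72 * (m * m) + (64 * m + 14) := by ring
    rw [h3]
    exact Nat.add_lt_add_left (by omega) _

end Turan5

/-- If `r ≡ 0 (mod 4)` and `n = 3r + 1`, or `r ≡ 1 (mod 4)` and `n = 3r + 2`, or
`r ≡ 2 (mod 4)` and `n = 3r`, then every `r`-edge-colouring of `K_n` has a colour class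
with more than `ex(n, P₅)` edges, and hence a monochromatic copy of `P₅`. -/
theorem colour_class_exceeds_turan (r n : ℕ) (hr : 1 ≤ r)
    (h : (r % 4 = 0 ∧ n = 3 * r + 1) ∨ (r % 4 = 1 ∧ n = 3 * r + 2) ∨
      (r % 4 = 2 ∧ n = 3 * r))
    (C : Sym2 (Fin n) → Fin r) :
    (∃ c : Fin r, exPath 5 n < (colorClass C c).edgeSet.ncard) ∧
    HasMonoPath 5 C := by
  classical
  set T : Set ℕ :=
    {m | ∃ G : SimpleGraph (Fin n), ¬ ContainsPath 5 G ∧ G.edgeSet.ncard = m} with hT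
  -- every colour class edge count, summed, gives `n.choose 2`
  have h1 : ∀ c : Fin r, (colorClass C c).edgeSet.ncard
      = (Finset.univ.filter (fun e : Sym2 (Fin n) => ¬ e.IsDiag ∧ C e = c)).card := by
    intro c
    have hset : (colorClass C c).edgeSet
        = ↑(Finset.univ.filter (fun e : Sym2 (Fin n) => ¬ e.IsDiag ∧ C e = c)) := by
      rw [colorClass, SimpleGraph.edgeSet_fromEdgeSet]
      ext e
      simp [and_comm]
    rw [hset, Set.ncard_coe_finset]
  have h2 := Finset.card_eq_sum_card_fiberwise
    (f := C) (s := Finset.univ.filter (fun e : Sym2 (Fin n) => ¬ e.IsDiag))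
    (t := Finset.univ) (fun x _ => Finset.mem_univ _)
  simp only [Finset.filter_filter] at h2
  have h3 : (Finset.univ.filter (fun e : Sym2 (Fin n) => ¬ e.IsDiag)).card = n.choose 2 := by
    rw [← Fintype.card_subtype, Sym2.card_subtype_not_diag, Fintype.card_fin]
  have hsum : ∑ c : Fin r, (colorClass C c).edgeSet.ncard = n.choose 2 := by
    calc ∑ c : Fin r, (colorClass C c).edgeSet.ncard
        = ∑ c : Fin r, (Finset.univ.filter
            (fun e : Sym2 (Fin n) => ¬ e.IsDiag ∧ C e = c)).card :=
          Finset.sum_congr rfl (fun c _ => h1 c)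
      _ = (Finset.univ.filter (fun e : Sym2 (Fin n) => ¬ e.IsDiag)).card := h2.symm
      _ = n.choose 2 := h3
  have harith : r * Turan5.f n < n * (n - 1) / 2 := Turan5.main_arith hr h
  have hkey : ∃ c : Fin r, Turan5.f n < (colorClass C c).edgeSet.ncard := by
    by_contra hcon
    push_neg at hcon
    have hle : ∑ c : Fin r, (colorClass C c).edgeSet.ncard ≤ ∑ _c : Fin r, Turan5.f n :=
      Finset.sum_le_sum (fun c _ => hcon c)
    rw [hsum, Finset.sum_const, Finset.card_univ, Fintype.card_fin, smul_eq_mul,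
      Nat.choose_two_right] at hle
    omega
  obtain ⟨c, hc⟩ := hkey
  have hub : ∀ m ∈ T, m ≤ Turan5.f n := by
    rintro m ⟨G, hG, rfl⟩
    haveI : DecidableRel G.Adj := Classical.decRel _
    have hnc : G.edgeSet.ncard = G.edgeFinset.card := Set.ncard_eq_toFinset_card' _
    rw [hnc]
    have hb := Turan5.bound_card G hG
    rwa [Fintype.card_fin] at hb
  have hne : T.Nonempty := by
    refine ⟨0, ⊥, ?_, by simp⟩
    rintro ⟨f0, hinj, hadj⟩
    exact hadj 0 1 (by decide)
  have hex : exPath 5 n ≤ Turan5.f n := csSup_le hne hub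
  refine ⟨⟨c, lt_of_le_of_lt hex hc⟩, ⟨c, ?_⟩⟩
  by_contra hnc
  have hmem : (colorClass C c).edgeSet.ncard ∈ T := ⟨colorClass C c, hnc, rfl⟩
  have hle : (colorClass C c).edgeSet.ncard ≤ exPath 5 n :=
    le_csSup ⟨Turan5.f n, hub⟩ hmem
  omega
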